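/- The five 3×3 symmetric matrices M₀ = [[0,0,0],[0,1,1],[0,1,1]], M₁ = [[0,0,0],[0,1,0],[0,0,−1]], M₂ = [[0,1,1],[1,0,−5],[1,−5,6]], M₃ = [[0,1,−1],[1,−4,3],[−1,3,−2]], M₄ = [[1,−2,1],[−2,4,−2],[1,−2,1]] are linearly independent in the 6-dimensional space of real symmetric 3×3 matrices, and hence the span of the outer products B(x)B(x)ᵀ over x ∈ (0,1), where B(x) = (x²/2, −x²+x+1/2, x²/2−x+1/2)ᵀ, is a proper 5-dimensional subspace of the symmetric 3×3 matrices. -/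

import Mathlib

open Matrix Set
set_option maxHeartbeats 1000000

/-- The B-spline vector `B(x) = (B₃(x), B₃(x+1), B₃(x+2))ᵀ` on `(0,1)`. -/
noncomputable def Bvec (x : ℝ) : Fin 3 → ℝ :=
  ![x ^ 2 / 2, -x ^ 2 + x + 1 / 2, x ^ 2 / 2 - x + 1 / 2]

noncomputable def Mmats : Fin 5 → Matrix (Fin 3) (Fin 3) ℝ :=
  ![!![0, 0, 0; 0, 1, 1; 0, 1, 1],
    !![0, 0, 0; 0, 1, 0; 0, 0, -1],
    !![0, 1, 1; 1, 0, -5; 1, -5, 6],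
    !![0, 1, -1; 1, -4, 3; -1, 3, -2],
    !![1, -2, 1; -2, 4, -2; 1, -2, 1]]

private lemma keyBB (x : ℝ) :
    Matrix.vecMulVec (Bvec x) (Bvec x) =
      (1/4 : ℝ) • Mmats 0 + x • Mmats 1 + (x^2/4) • Mmats 2 +
        (x^3/2) • Mmats 3 + (x^4/4) • Mmats 4 := by
  ext i j
  fin_cases i <;> fin_cases j <;>
    simp [Mmats, Bvec, Matrix.vecMulVec, Matrix.vecHead, Matrix.vecTail, Matrix.add_apply, Matrix.smul_apply, smul_eq_mul] <;> ring

private lemma li_M : LinearIndependent ℝ Mmats := by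
  rw [Fintype.linearIndependent_iff]
  intro g hg i
  have h := fun i j => congrFun (congrFun hg i) j
  simp [Fin.sum_univ_five, Mmats] at h
  have h00 := h 0 0
  have h01 := h 0 1
  have h02 := h 0 2
  have h11 := h 1 1
  have h22 := h 2 2
  simp at h00 h01 h02 h11 h22
  fin_cases i <;> simp <;> linarith

theorem stmt_10 :
    LinearIndependent ℝ Mmats ∧
    (∀ i, (Mmats i).IsSymm) ∧
    (Submodule.span ℝ {A : Matrix (Fin 3) (Fin 3) ℝ |
        ∃ x ∈ Set.Ioo (0 : ℝ) 1, A = Matrix.vecMulVec (Bvec x) (Bvec x)} =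
      Submodule.span ℝ (Set.range Mmats)) ∧
    Module.finrank ℝ (Submodule.span ℝ {A : Matrix (Fin 3) (Fin 3) ℝ |
        ∃ x ∈ Set.Ioo (0 : ℝ) 1, A = Matrix.vecMulVec (Bvec x) (Bvec x)}) = 5 ∧
    ∃ S : Matrix (Fin 3) (Fin 3) ℝ, S.IsSymm ∧
      S ∉ Submodule.span ℝ {A : Matrix (Fin 3) (Fin 3) ℝ |
        ∃ x ∈ Set.Ioo (0 : ℝ) 1, A = Matrix.vecMulVec (Bvec x) (Bvec x)} := by
  set Sset : Set (Matrix (Fin 3) (Fin 3) ℝ) :=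
    {A : Matrix (Fin 3) (Fin 3) ℝ |
      ∃ x ∈ Set.Ioo (0 : ℝ) 1, A = Matrix.vecMulVec (Bvec x) (Bvec x)} with hSset
  have hMmem : ∀ i, Mmats i ∈ Submodule.span ℝ (Set.range Mmats) := fun i =>
    Submodule.subset_span ⟨i, rfl⟩
  -- forward inclusion
  have hfwd : Submodule.span ℝ Sset ≤ Submodule.span ℝ (Set.range Mmats) := by
    rw [Submodule.span_le]
    rintro A ⟨x, _, rfl⟩
    rw [keyBB x]
    exact Submodule.add_mem _ (Submodule.add_mem _ (Submodule.add_mem _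
      (Submodule.add_mem _ (Submodule.smul_mem _ _ (hMmem 0))
        (Submodule.smul_mem _ _ (hMmem 1))) (Submodule.smul_mem _ _ (hMmem 2)))
      (Submodule.smul_mem _ _ (hMmem 3))) (Submodule.smul_mem _ _ (hMmem 4))
  -- generators A(x_j)
  have hA : ∀ x : ℝ, x ∈ Set.Ioo (0:ℝ) 1 →
      Matrix.vecMulVec (Bvec x) (Bvec x) ∈ Submodule.span ℝ Sset := fun x hx =>
    Submodule.subset_span ⟨x, hx, rfl⟩
  have m1 : ((1:ℝ)/6) ∈ Set.Ioo (0:ℝ) 1 := by norm_num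
  have m2 : ((1:ℝ)/3) ∈ Set.Ioo (0:ℝ) 1 := by norm_num
  have m3 : ((1:ℝ)/2) ∈ Set.Ioo (0:ℝ) 1 := by norm_num
  have m4 : ((2:ℝ)/3) ∈ Set.Ioo (0:ℝ) 1 := by norm_num
  have m5 : ((5:ℝ)/6) ∈ Set.Ioo (0:ℝ) 1 := by norm_num
  have hcomb : ∀ (c1 c2 c3 c4 c5 : ℝ),
      c1 • Matrix.vecMulVec (Bvec (1/6)) (Bvec (1/6)) +
      c2 • Matrix.vecMulVec (Bvec (1/3)) (Bvec (1/3)) +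
      c3 • Matrix.vecMulVec (Bvec (1/2)) (Bvec (1/2)) +
      c4 • Matrix.vecMulVec (Bvec (2/3)) (Bvec (2/3)) +
      c5 • Matrix.vecMulVec (Bvec (5/6)) (Bvec (5/6)) ∈ Submodule.span ℝ Sset := by
    intro c1 c2 c3 c4 c5
    exact Submodule.add_mem _ (Submodule.add_mem _ (Submodule.add_mem _
      (Submodule.add_mem _ (Submodule.smul_mem _ _ (hA _ m1))
        (Submodule.smul_mem _ _ (hA _ m2))) (Submodule.smul_mem _ _ (hA _ m3)))
      (Submodule.smul_mem _ _ (hA _ m4))) (Submodule.smul_mem _ _ (hA _ m5))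
  have hMi : ∀ i, Mmats i ∈ Submodule.span ℝ Sset := by
    intro i
    fin_cases i
    · have : Mmats 0 =
          (20:ℝ) • Matrix.vecMulVec (Bvec (1/6)) (Bvec (1/6)) +
          (-40:ℝ) • Matrix.vecMulVec (Bvec (1/3)) (Bvec (1/3)) +
          (40:ℝ) • Matrix.vecMulVec (Bvec (1/2)) (Bvec (1/2)) +
          (-20:ℝ) • Matrix.vecMulVec (Bvec (2/3)) (Bvec (2/3)) +
          (4:ℝ) • Matrix.vecMulVec (Bvec (5/6)) (Bvec (5/6)) := by
        ext i j; fin_cases i <;> fin_cases j <;>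
          norm_num [Mmats, Bvec, Matrix.vecMulVec, Matrix.vecHead, Matrix.vecTail, Matrix.add_apply, Matrix.smul_apply, smul_eq_mul]
      show Mmats 0 ∈ _
      rw [this]; exact hcomb _ _ _ _ _
    · have : Mmats 1 =
          (-77/2:ℝ) • Matrix.vecMulVec (Bvec (1/6)) (Bvec (1/6)) +
          (107:ℝ) • Matrix.vecMulVec (Bvec (1/3)) (Bvec (1/3)) +
          (-117:ℝ) • Matrix.vecMulVec (Bvec (1/2)) (Bvec (1/2)) +
          (61:ℝ) • Matrix.vecMulVec (Bvec (2/3)) (Bvec (2/3)) +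
          (-25/2:ℝ) • Matrix.vecMulVec (Bvec (5/6)) (Bvec (5/6)) := by
        ext i j; fin_cases i <;> fin_cases j <;>
          norm_num [Mmats, Bvec, Matrix.vecMulVec, Matrix.vecHead, Matrix.vecTail, Matrix.add_apply, Matrix.smul_apply, smul_eq_mul]
      show Mmats 1 ∈ _
      rw [this]; exact hcomb _ _ _ _ _
    · have : Mmats 2 =
          (426:ℝ) • Matrix.vecMulVec (Bvec (1/6)) (Bvec (1/6)) +
          (-1416:ℝ) • Matrix.vecMulVec (Bvec (1/3)) (Bvec (1/3)) +
          (1764:ℝ) • Matrix.vecMulVec (Bvec (1/2)) (Bvec (1/2)) +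
          (-984:ℝ) • Matrix.vecMulVec (Bvec (2/3)) (Bvec (2/3)) +
          (210:ℝ) • Matrix.vecMulVec (Bvec (5/6)) (Bvec (5/6)) := by
        ext i j; fin_cases i <;> fin_cases j <;>
          norm_num [Mmats, Bvec, Matrix.vecMulVec, Matrix.vecHead, Matrix.vecTail, Matrix.add_apply, Matrix.smul_apply, smul_eq_mul, Matrix.cons_val_two, Matrix.cons_val_three, Matrix.cons_val_four, Matrix.tail_cons]
      show Mmats 2 ∈ _
      rw [this]; exact hcomb _ _ _ _ _
    · have : Mmats 3 =
          (-252:ℝ) • Matrix.vecMulVec (Bvec (1/6)) (Bvec (1/6)) +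
          (936:ℝ) • Matrix.vecMulVec (Bvec (1/3)) (Bvec (1/3)) +
          (-1296:ℝ) • Matrix.vecMulVec (Bvec (1/2)) (Bvec (1/2)) +
          (792:ℝ) • Matrix.vecMulVec (Bvec (2/3)) (Bvec (2/3)) +
          (-180:ℝ) • Matrix.vecMulVec (Bvec (5/6)) (Bvec (5/6)) := by
        ext i j; fin_cases i <;> fin_cases j <;>
          norm_num [Mmats, Bvec, Matrix.vecMulVec, Matrix.vecHead, Matrix.vecTail, Matrix.add_apply, Matrix.smul_apply, smul_eq_mul, Matrix.cons_val_two, Matrix.cons_val_three, Matrix.cons_val_four, Matrix.tail_cons]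
      show Mmats 3 ∈ _
      rw [this]; exact hcomb _ _ _ _ _
    · have : Mmats 4 =
          (216:ℝ) • Matrix.vecMulVec (Bvec (1/6)) (Bvec (1/6)) +
          (-864:ℝ) • Matrix.vecMulVec (Bvec (1/3)) (Bvec (1/3)) +
          (1296:ℝ) • Matrix.vecMulVec (Bvec (1/2)) (Bvec (1/2)) +
          (-864:ℝ) • Matrix.vecMulVec (Bvec (2/3)) (Bvec (2/3)) +
          (216:ℝ) • Matrix.vecMulVec (Bvec (5/6)) (Bvec (5/6)) := by
        ext i j; fin_cases i <;> fin_cases j <;>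
          norm_num [Mmats, Bvec, Matrix.vecMulVec, Matrix.vecHead, Matrix.vecTail, Matrix.add_apply, Matrix.smul_apply, smul_eq_mul, Matrix.cons_val_two, Matrix.cons_val_three, Matrix.cons_val_four, Matrix.tail_cons]
      show Mmats 4 ∈ _
      rw [this]; exact hcomb _ _ _ _ _
  have hbwd : Submodule.span ℝ (Set.range Mmats) ≤ Submodule.span ℝ Sset := by
    rw [Submodule.span_le]
    rintro A ⟨i, rfl⟩
    exact hMi i
  have hspan : Submodule.span ℝ Sset = Submodule.span ℝ (Set.range Mmats) :=
    le_antisymm hfwd hbwd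
  refine ⟨li_M, ?_, hspan, ?_, ?_⟩
  · intro i
    fin_cases i <;> · ext a b; fin_cases a <;> fin_cases b <;> simp [Mmats, Matrix.IsSymm, Matrix.vecHead, Matrix.vecTail, Matrix.transpose_apply]
  · rw [hspan, finrank_span_eq_card li_M]
    simp
  · refine ⟨!![1,0,0;0,0,0;0,0,0], ?_, ?_⟩
    · ext a b; fin_cases a <;> fin_cases b <;> simp [Matrix.vecHead, Matrix.vecTail, Matrix.transpose_apply]
    · rw [hspan]
      intro hmem
      rw [Submodule.mem_span_range_iff_exists_fun ℝ] at hmem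
      obtain ⟨g, hg⟩ := hmem
      have h := fun i j => congrFun (congrFun hg i) j
      simp [Fin.sum_univ_five, Mmats] at h
      have h00 := h 0 0
      have h01 := h 0 1
      have h02 := h 0 2
      have h11 := h 1 1
      have h22 := h 2 2
      have h12 := h 1 2
      simp [Matrix.vecHead, Matrix.vecTail] at h00 h01 h02 h11 h22 h12
      linarith
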